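/- There exists a linearly ordered pointed residuated po-monoid (M, ≤, ⊙, t, →, ⇝) with least element ⊥ and greatest element ⊤, together with elements a, b, c, d of M, such that it is not the case that t ≤ max b (((d→b) ⊙ c ⊙ (c→d) ⊙ a) → a). (Algebraic form of the paper's Lemma 2.4: the formula B ∨ ((D→B)⊙C⊙(C→D)⊙A → A) is not valid in all linearly ordered HpsUL-algebras, hence not a theorem of HpsUL.) -/
import Mathlib

def tblO : Fin 6 → Fin 6 → Fin 6 := fun x y =>
  (![![0,0,0,0,0,0],![0,0,1,1,1,1],![0,1,2,2,2,5],![0,1,2,3,4,5],![0,1,2,4,4,5],![0,1,2,5,5,5]] : Fin 6 → Fin 6 → Fin 6) x y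

def tblI : Fin 6 → Fin 6 → Fin 6 := fun x y =>
  (![![5,5,5,5,5,5],![1,5,5,5,5,5],![0,1,4,4,4,5],![0,1,2,3,4,5],![0,1,2,2,4,5],![0,1,2,2,2,5]] : Fin 6 → Fin 6 → Fin 6) x y

def tblL : Fin 6 → Fin 6 → Fin 6 := fun x y =>
  (![![5,5,5,5,5,5],![1,5,5,5,5,5],![0,1,5,5,5,5],![0,1,2,3,4,5],![0,1,2,2,4,5],![0,1,1,1,1,5]] : Fin 6 → Fin 6 → Fin 6) x y

theorem lemma_2_4_algebraic :
    ∃ (M : Type) (_ : LinearOrder M) (odot : M → M → M) (t : M)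
      (imp limp : M → M → M) (bot top : M),
      (∀ x, bot ≤ x) ∧ (∀ x, x ≤ top) ∧
      (∀ x y z, odot (odot x y) z = odot x (odot y z)) ∧
      (∀ x, odot t x = x) ∧ (∀ x, odot x t = x) ∧
      (∀ x y z, odot x y ≤ z ↔ y ≤ imp x z) ∧
      (∀ x y z, odot x y ≤ z ↔ x ≤ limp y z) ∧
      ∃ a b c d : M,
        ¬ t ≤ max b (imp (odot (odot (odot (imp d b) c) (imp c d)) a) a) := by
  refine ⟨Fin 6, inferInstance, tblO, 3, tblI, tblL, 0, 5, ?_, ?_, ?_, ?_, ?_, ?_, ?_, 3, 2, 2, 5, ?_⟩ <;> decide
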